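/- Let T be an invertible linear map on ℝⁿ and K an origin-symmetric star body, and 0 < p < n with p not an even integer. Define L_K by ‖θ‖_{L_K}^{−p} = |(‖·‖_K^{−n+p})^∧(θ)| for θ ∈ S^{n−1} (Fourier transform in the distributional sense). Then ∫_{S^{n−1}} |(‖·‖_{TK}^{−n+p})^∧(θ)|^{n/p} dθ = |det T|^{n/p − 1} · ∫_{S^{n−1}} |(‖·‖_K^{−n+p})^∧(θ)|^{n/p} dθ. -/

import Mathlib

open MeasureTheory Metric Real

section helpers

open Measure Set ENNReal

theorem inner_calc (n : ℕ) (hn : 1 ≤ n) (a : ℝ) (ha : 0 < a) (C : ℝ) (hC : 0 ≤ C) :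
    ∫⁻ r in Ioi (0:ℝ), ENNReal.ofReal (r ^ (n - 1)) *
      ENNReal.ofReal ((r ^ (-(n:ℝ)) * C) * Set.indicator (Ioo (1:ℝ) 2) 1 (a * r)) ∂volume =
    ENNReal.ofReal C * ENNReal.ofReal (Real.log 2) := by
  have h1 : ∀ r ∈ Ioi (0:ℝ),
      ENNReal.ofReal (r ^ (n - 1)) *
        ENNReal.ofReal ((r ^ (-(n:ℝ)) * C) * Set.indicator (Ioo (1:ℝ) 2) 1 (a * r)) =
      ENNReal.ofReal C * (Ioo (1/a) (2/a)).indicator (fun r => ENNReal.ofReal r⁻¹) r := by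
    intro r hr
    rw [mem_Ioi] at hr
    have hme : a * r ∈ Ioo (1:ℝ) 2 ↔ r ∈ Ioo (1/a) (2/a) := by
      constructor
      · rintro ⟨h1', h2'⟩
        exact ⟨(div_lt_iff₀ ha).2 (by linarith), (lt_div_iff₀ ha).2 (by linarith)⟩
      · rintro ⟨h1', h2'⟩
        rw [div_lt_iff₀ ha] at h1'
        rw [lt_div_iff₀ ha] at h2'
        exact ⟨by linarith, by linarith⟩
    have hpow : r ^ (n - 1) * r ^ (-(n:ℝ)) = r⁻¹ := by
      have hc : ((n - 1 : ℕ) : ℝ) + -(n:ℝ) = -1 := by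
        rw [Nat.cast_sub hn]; push_cast; ring
      rw [← Real.rpow_natCast r (n-1), ← Real.rpow_add hr, hc, Real.rpow_neg_one]
    by_cases hmem : a * r ∈ Ioo (1:ℝ) 2
    · rw [Set.indicator_of_mem hmem, Set.indicator_of_mem (hme.1 hmem)]
      simp only [Pi.one_apply, mul_one]
      rw [← ENNReal.ofReal_mul (by positivity), ← ENNReal.ofReal_mul hC]
      congr 1
      rw [← mul_assoc, hpow, mul_comm]
    · rw [Set.indicator_of_notMem hmem, Set.indicator_of_notMem (fun h => hmem (hme.2 h))]
      simp
  rw [setLIntegral_congr_fun measurableSet_Ioi h1]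
  have hsub : Ioo (1/a) (2/a) ⊆ Ioi (0:ℝ) := fun x hx => lt_trans (by positivity) hx.1
  rw [lintegral_const_mul' _ _ ENNReal.ofReal_ne_top]
  congr 1
  rw [lintegral_indicator measurableSet_Ioo, Measure.restrict_restrict measurableSet_Ioo,
    inter_eq_self_of_subset_left hsub]
  have hlt : 1/a < 2/a := by
    rw [div_lt_div_iff₀ ha ha]; linarith
  have hint : IntegrableOn (fun r : ℝ => r⁻¹) (Ioo (1/a) (2/a)) volume := by
    have := intervalIntegral.intervalIntegrable_inv (f := fun x : ℝ => x) (μ := volume)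
      (a := 1/a) (b := 2/a) (fun x hx => ?_) continuousOn_id
    · exact (this.1).mono_set Ioo_subset_Ioc_self
    · rw [uIcc_of_le hlt.le] at hx
      have : 0 < x := lt_of_lt_of_le (by positivity) hx.1
      exact this.ne'
  rw [← ofReal_integral_eq_lintegral_ofReal hint]
  · congr 1
    rw [setIntegral_congr_set Ioo_ae_eq_Ioc, ← intervalIntegral.integral_of_le hlt.le,
      integral_inv_of_pos (by positivity) (by positivity)]
    congr 1
    field_simp
  · filter_upwards [ae_restrict_mem measurableSet_Ioo] with x hx
    exact inv_nonneg.2 (le_trans (by positivity) hx.1.le)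

section aux
variable (n : ℕ)
local notation "E" => EuclideanSpace ℝ (Fin n)

theorem aux_polar (hn : 1 ≤ n) (f : E → ℝ≥0∞) (hf : Measurable f) :
    ∫⁻ x, f x ∂(volume : Measure E) =
      ∫⁻ θ : sphere (0 : E) 1,
        ∫⁻ r in Ioi (0:ℝ), ENNReal.ofReal (r ^ (n - 1)) * f (r • (θ : E)) ∂volume
          ∂(volume : Measure (EuclideanSpace ℝ (Fin n))).toSphere := by
  haveI : Nontrivial E := by
    have : 0 < Module.finrank ℝ E := by rw [finrank_euclideanSpace_fin]; omega
    exact Module.nontrivial_of_finrank_pos this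
  have hdim : Module.finrank ℝ E = n := finrank_euclideanSpace_fin
  set μ : Measure E := volume
  have hmp := Measure.measurePreserving_homeomorphUnitSphereProd μ
  have hg : Measurable fun p : sphere (0:E) 1 × Ioi (0:ℝ) => f (p.2.1 • p.1.1) := by
    apply hf.comp
    exact ((continuous_subtype_val.comp continuous_snd).smul
      (continuous_subtype_val.comp continuous_fst)).measurable
  calc ∫⁻ x, f x ∂μ = ∫⁻ x, f x ∂(μ.restrict {0}ᶜ) := by
        rw [MeasureTheory.restrict_compl_singleton]
    _ = ∫⁻ x : ({(0:E)}ᶜ : Set E), f x ∂(μ.comap Subtype.val) := by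
        rw [lintegral_subtype_comap (measurableSet_singleton _).compl]
    _ = ∫⁻ p : sphere (0:E) 1 × Ioi (0:ℝ), f (p.2.1 • p.1.1)
          ∂(μ.toSphere.prod (Measure.volumeIoiPow (Module.finrank ℝ E - 1))) := by
        rw [← hmp.lintegral_comp hg]
        refine lintegral_congr fun x => ?_
        simp only [homeomorphUnitSphereProd_apply_snd_coe, homeomorphUnitSphereProd_apply_fst_coe]
        rw [smul_inv_smul₀ (norm_ne_zero_iff.2 x.2)]
    _ = ∫⁻ θ : sphere (0:E) 1, ∫⁻ r : Ioi (0:ℝ), f (r.1 • (θ : E))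
          ∂(Measure.volumeIoiPow (Module.finrank ℝ E - 1)) ∂μ.toSphere := by
        rw [lintegral_prod _ hg.aemeasurable]
    _ = _ := by
        refine lintegral_congr fun θ => ?_
        rw [hdim, Measure.volumeIoiPow, lintegral_withDensity_eq_lintegral_mul _
          ((measurable_subtype_coe.pow_const _).ennreal_ofReal)
          (show Measurable fun r : Ioi (0:ℝ) => f ((r:ℝ) • (θ:E)) from
            hf.comp (measurable_subtype_coe.smul_const _))]
        exact lintegral_subtype_comap measurableSet_Ioi
          fun r => ENNReal.ofReal (r ^ (n - 1)) * f (r • (θ : E))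

theorem key_lint (hn : 1 ≤ n) (B : EuclideanSpace ℝ (Fin n) ≃L[ℝ] EuclideanSpace ℝ (Fin n))
    (F : E → ℝ) (hFm : Measurable F) (hF0 : ∀ x, 0 ≤ F x)
    (hFh : ∀ c : ℝ, 0 < c → ∀ x, F (c • x) = c ^ (-(n:ℝ)) * F x) :
    ∫⁻ x, ENNReal.ofReal (F x * Set.indicator (Ioo (1:ℝ) 2) 1 ‖B x‖) ∂(volume : Measure E) =
      ENNReal.ofReal (Real.log 2) *
        ∫⁻ θ : sphere (0:E) 1, ENNReal.ofReal (F θ) ∂(volume : Measure (EuclideanSpace ℝ (Fin n))).toSphere := by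
  have hψ : Measurable (Set.indicator (Ioo (1:ℝ) 2) (1 : ℝ → ℝ)) :=
    measurable_const.indicator measurableSet_Ioo
  have hf : Measurable fun x : E => ENNReal.ofReal (F x * Set.indicator (Ioo (1:ℝ) 2) 1 ‖B x‖) :=
    (hFm.mul (hψ.comp (B.continuous.norm.measurable))).ennreal_ofReal
  rw [aux_polar n hn _ hf]
  have hinner : ∀ θ : sphere (0:E) 1,
      (∫⁻ r in Ioi (0:ℝ), ENNReal.ofReal (r ^ (n - 1)) *
        ENNReal.ofReal (F (r • (θ:E)) * Set.indicator (Ioo (1:ℝ) 2) 1 ‖B (r • (θ:E))‖) ∂volume)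
      = ENNReal.ofReal (F (θ:EuclideanSpace ℝ (Fin n))) * ENNReal.ofReal (Real.log 2) := by
    intro θ
    have hθ : (θ:E) ≠ 0 := ne_of_mem_sphere θ.2 one_ne_zero
    have hBθ : 0 < ‖B (θ:E)‖ := by
      rw [norm_pos_iff]
      simpa using (B.map_ne_zero_iff ..).2 hθ
    have hcong : ∀ r ∈ Ioi (0:ℝ),
        ENNReal.ofReal (r ^ (n - 1)) *
          ENNReal.ofReal (F (r • (θ:E)) * Set.indicator (Ioo (1:ℝ) 2) 1 ‖B (r • (θ:E))‖)
        = ENNReal.ofReal (r ^ (n - 1)) *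
          ENNReal.ofReal ((r ^ (-(n:ℝ)) * F (θ:EuclideanSpace ℝ (Fin n))) *
            Set.indicator (Ioo (1:ℝ) 2) 1 (‖B (θ:E)‖ * r)) := by
      intro r hr
      rw [mem_Ioi] at hr
      rw [hFh r hr, show B (r • (θ:E)) = r • B (θ:E) from B.map_smul r _,
        norm_smul, Real.norm_eq_abs, abs_of_pos hr, mul_comm r ‖B (θ:E)‖]
    rw [setLIntegral_congr_fun measurableSet_Ioi hcong]
    exact inner_calc n hn _ hBθ _ (hF0 _)
  calc ∫⁻ θ : sphere (0:E) 1, (∫⁻ r in Ioi (0:ℝ), ENNReal.ofReal (r ^ (n - 1)) *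
        ENNReal.ofReal (F (r • (θ:E)) * Set.indicator (Ioo (1:ℝ) 2) 1 ‖B (r • (θ:E))‖) ∂volume)
        ∂(volume : Measure (EuclideanSpace ℝ (Fin n))).toSphere
      = ∫⁻ θ : sphere (0:E) 1, ENNReal.ofReal (Real.log 2) * ENNReal.ofReal (F (θ:EuclideanSpace ℝ (Fin n)))
          ∂(volume : Measure (EuclideanSpace ℝ (Fin n))).toSphere := by
        refine lintegral_congr fun θ => ?_
        rw [hinner θ, mul_comm]
    _ = _ := lintegral_const_mul' _ _ ENNReal.ofReal_ne_top

theorem sphere_lint (hn : 1 ≤ n) (A : EuclideanSpace ℝ (Fin n) ≃L[ℝ] EuclideanSpace ℝ (Fin n))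
    (F : E → ℝ) (hFm : Measurable F) (hF0 : ∀ x, 0 ≤ F x)
    (hFh : ∀ c : ℝ, 0 < c → ∀ x, F (c • x) = c ^ (-(n:ℝ)) * F x) :
    ∫⁻ θ : sphere (0:E) 1, ENNReal.ofReal (F (A (θ:EuclideanSpace ℝ (Fin n)))) ∂(volume : Measure (EuclideanSpace ℝ (Fin n))).toSphere =
      ENNReal.ofReal |(LinearMap.det (A : EuclideanSpace ℝ (Fin n) →ₗ[ℝ] EuclideanSpace ℝ (Fin n)))|⁻¹ *
        ∫⁻ θ : sphere (0:E) 1, ENNReal.ofReal (F (θ:EuclideanSpace ℝ (Fin n))) ∂(volume : Measure (EuclideanSpace ℝ (Fin n))).toSphere := by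
  have hFAm : Measurable fun x : E => F (A x) := hFm.comp A.continuous.measurable
  have hFAh : ∀ c : ℝ, 0 < c → ∀ x : E, F (A (c • x)) = c ^ (-(n:ℝ)) * F (A x) := by
    intro c hc x
    rw [A.map_smul, hFh c hc]
  have h1 := key_lint n hn (ContinuousLinearEquiv.refl ℝ E) (fun x => F (A x)) hFAm
    (fun x => hF0 _) hFAh
  have h2 := key_lint n hn A.symm F hFm hF0 hFh
  have hdet : LinearMap.det (A : EuclideanSpace ℝ (Fin n) →ₗ[ℝ] EuclideanSpace ℝ (Fin n)) ≠ 0 := A.toLinearEquiv.isUnit_det'.ne_zero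
  have hψ : Measurable (Set.indicator (Ioo (1:ℝ) 2) (1 : ℝ → ℝ)) :=
    measurable_const.indicator measurableSet_Ioo
  have hh : Measurable fun y : E =>
      ENNReal.ofReal (F y * Set.indicator (Ioo (1:ℝ) 2) 1 ‖A.symm y‖) :=
    (hFm.mul (hψ.comp (A.symm.continuous.norm.measurable))).ennreal_ofReal
  have hmap : (volume : Measure E).map A =
      ENNReal.ofReal |(LinearMap.det (A : EuclideanSpace ℝ (Fin n) →ₗ[ℝ] EuclideanSpace ℝ (Fin n)))⁻¹| • (volume : Measure E) :=
    Measure.map_linearMap_addHaar_eq_smul_addHaar volume hdet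
  have hcv : ∫⁻ x, ENNReal.ofReal (F (A x) * Set.indicator (Ioo (1:ℝ) 2) 1 ‖x‖)
        ∂(volume : Measure E)
      = ENNReal.ofReal |(LinearMap.det (A : EuclideanSpace ℝ (Fin n) →ₗ[ℝ] EuclideanSpace ℝ (Fin n)))|⁻¹ *
        ∫⁻ y, ENNReal.ofReal (F y * Set.indicator (Ioo (1:ℝ) 2) 1 ‖A.symm y‖)
          ∂(volume : Measure E) := by
    have hpt : ∀ x : E, ENNReal.ofReal (F (A x) * Set.indicator (Ioo (1:ℝ) 2) 1 ‖x‖)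
        = ENNReal.ofReal (F (A x) * Set.indicator (Ioo (1:ℝ) 2) 1 ‖A.symm (A x)‖) := by
      intro x; rw [A.symm_apply_apply]
    simp only [hpt]
    rw [← lintegral_map hh A.continuous.measurable, hmap, lintegral_smul_measure, abs_inv, smul_eq_mul]
  have hrefl : ∀ x : E, ‖(ContinuousLinearEquiv.refl ℝ E) x‖ = ‖x‖ := fun x => rfl
  simp only [hrefl] at h1
  rw [h1, h2] at hcv
  rw [← mul_assoc, mul_comm (ENNReal.ofReal |(LinearMap.det (A : EuclideanSpace ℝ (Fin n) →ₗ[ℝ] EuclideanSpace ℝ (Fin n)))|⁻¹)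
    (ENNReal.ofReal (Real.log 2)), mul_assoc] at hcv
  exact (ENNReal.mul_right_inj (by simp [Real.log_pos one_lt_two, ne_of_gt])
    ENNReal.ofReal_ne_top).1 hcv

theorem sphere_int (hn : 1 ≤ n) (A : EuclideanSpace ℝ (Fin n) ≃L[ℝ] EuclideanSpace ℝ (Fin n))
    (F : E → ℝ) (hFm : Measurable F) (hFc : ContinuousOn F {(0:EuclideanSpace ℝ (Fin n))}ᶜ) (hF0 : ∀ x, 0 ≤ F x)
    (hFh : ∀ c : ℝ, 0 < c → ∀ x, F (c • x) = c ^ (-(n:ℝ)) * F x) :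
    ∫ θ : sphere (0:E) 1, F (A (θ:EuclideanSpace ℝ (Fin n))) ∂(volume : Measure (EuclideanSpace ℝ (Fin n))).toSphere =
      |LinearMap.det (A : EuclideanSpace ℝ (Fin n) →ₗ[ℝ] EuclideanSpace ℝ (Fin n))|⁻¹ *
        ∫ θ : sphere (0:E) 1, F (θ:EuclideanSpace ℝ (Fin n)) ∂(volume : Measure (EuclideanSpace ℝ (Fin n))).toSphere := by
  have hcont : Continuous fun θ : sphere (0:E) 1 => F (θ:EuclideanSpace ℝ (Fin n)) :=
    hFc.comp_continuous continuous_subtype_val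
      (fun θ => ne_of_mem_sphere θ.2 one_ne_zero)
  have hcontA : Continuous fun θ : sphere (0:E) 1 => F (A (θ:EuclideanSpace ℝ (Fin n))) := by
    refine hFc.comp_continuous (A.continuous.comp continuous_subtype_val) fun θ => ?_
    exact (A.map_ne_zero_iff ..).2 (ne_of_mem_sphere θ.2 one_ne_zero)
  have hint : Integrable (fun θ : sphere (0:E) 1 => F (θ:EuclideanSpace ℝ (Fin n))) (volume : Measure (EuclideanSpace ℝ (Fin n))).toSphere := by
    rw [← integrableOn_univ]
    exact hcont.continuousOn.integrableOn_compact isCompact_univ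
  have hintA : Integrable (fun θ : sphere (0:E) 1 => F (A (θ:EuclideanSpace ℝ (Fin n))))
      (volume : Measure (EuclideanSpace ℝ (Fin n))).toSphere := by
    rw [← integrableOn_univ]
    exact hcontA.continuousOn.integrableOn_compact isCompact_univ
  have hl := sphere_lint n hn A F hFm hF0 hFh
  rw [← ofReal_integral_eq_lintegral_ofReal hintA (Filter.Eventually.of_forall fun θ => hF0 _),
      ← ofReal_integral_eq_lintegral_ofReal hint (Filter.Eventually.of_forall fun θ => hF0 _),
      ← ENNReal.ofReal_mul (inv_nonneg.2 (abs_nonneg _))] at hl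
  exact (ENNReal.ofReal_eq_ofReal_iff (integral_nonneg fun θ => hF0 _)
    (mul_nonneg (inv_nonneg.2 (abs_nonneg _)) (integral_nonneg fun θ => hF0 _))).1 hl

theorem det_adjoint (S : EuclideanSpace ℝ (Fin n) →L[ℝ] EuclideanSpace ℝ (Fin n)) :
    LinearMap.det ((ContinuousLinearMap.adjoint S : EuclideanSpace ℝ (Fin n) →L[ℝ] EuclideanSpace ℝ (Fin n)) : EuclideanSpace ℝ (Fin n) →ₗ[ℝ] EuclideanSpace ℝ (Fin n)) =
      LinearMap.det (S : EuclideanSpace ℝ (Fin n) →ₗ[ℝ] EuclideanSpace ℝ (Fin n)) := by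
  let b := EuclideanSpace.basisFun (Fin n) ℝ
  rw [← LinearMap.det_toMatrix b.toBasis, ← LinearMap.det_toMatrix b.toBasis]
  have h : LinearMap.adjoint (S : EuclideanSpace ℝ (Fin n) →ₗ[ℝ] EuclideanSpace ℝ (Fin n)) =
      ((ContinuousLinearMap.adjoint S : EuclideanSpace ℝ (Fin n) →L[ℝ] EuclideanSpace ℝ (Fin n)) : EuclideanSpace ℝ (Fin n) →ₗ[ℝ] EuclideanSpace ℝ (Fin n)) := by
    rw [LinearMap.adjoint_eq_toCLM_adjoint]
    congr 1
  rw [← h, LinearMap.toMatrix_adjoint, Matrix.det_conjTranspose, star_trivial]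

end aux

end helpers

/-- Linear invariance of the quantity `∫_{S^{n−1}} |(‖·‖_K^{−n+p})^∧(θ)|^{n/p} dθ`.
Since the distributional Fourier transform of `‖·‖_K^{−n+p}` is not available in Mathlib,
it is modelled by a function `g`, continuous and even on `ℝⁿ \ {0}` and positively
homogeneous of degree `−p` (these are precisely the properties of that Fourier transform).
The Fourier transform of `‖·‖_{TK}^{−n+p} = (‖·‖_K^{−n+p}) ∘ T⁻¹` is then
`|det T| · g ∘ Tᵗ`, and the claim is
`∫_{S^{n−1}} ||det T| · g(Tᵗθ)|^{n/p} dθ = |det T|^{n/p−1} ∫_{S^{n−1}} |g(θ)|^{n/p} dθ`. -/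
theorem fourier_integral_linear_invariance (n : ℕ) (hn : 1 ≤ n) (p : ℝ)
    (hp : 0 < p) (hpn : p < n) (hpnoteven : ∀ k : ℕ, p ≠ 2 * k)
    (T : EuclideanSpace ℝ (Fin n) ≃L[ℝ] EuclideanSpace ℝ (Fin n))
    (g : EuclideanSpace ℝ (Fin n) → ℝ)
    (hgc : ContinuousOn g {(0 : EuclideanSpace ℝ (Fin n))}ᶜ)
    (hge : ∀ x, g (-x) = g x)
    (hghom : ∀ c : ℝ, 0 < c → ∀ x, g (c • x) = c ^ (-p) * g x) :
    ∫ θ : Metric.sphere (0 : EuclideanSpace ℝ (Fin n)) 1,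
        |LinearMap.det ((T : EuclideanSpace ℝ (Fin n) →L[ℝ] EuclideanSpace ℝ (Fin n)) :
            EuclideanSpace ℝ (Fin n) →ₗ[ℝ] EuclideanSpace ℝ (Fin n)) *
          g ((ContinuousLinearMap.adjoint
              (T : EuclideanSpace ℝ (Fin n) →L[ℝ] EuclideanSpace ℝ (Fin n)))
            (θ : EuclideanSpace ℝ (Fin n)))| ^ ((n : ℝ) / p)
      ∂((volume : Measure (EuclideanSpace ℝ (Fin n))).toSphere) =
    |LinearMap.det ((T : EuclideanSpace ℝ (Fin n) →L[ℝ] EuclideanSpace ℝ (Fin n)) :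
        EuclideanSpace ℝ (Fin n) →ₗ[ℝ] EuclideanSpace ℝ (Fin n))| ^ ((n : ℝ) / p - 1) *
      ∫ θ : Metric.sphere (0 : EuclideanSpace ℝ (Fin n)) 1,
        |g (θ : EuclideanSpace ℝ (Fin n))| ^ ((n : ℝ) / p)
      ∂((volume : Measure (EuclideanSpace ℝ (Fin n))).toSphere) := by
  set S : EuclideanSpace ℝ (Fin n) →L[ℝ] EuclideanSpace ℝ (Fin n) :=
    (T : EuclideanSpace ℝ (Fin n) →L[ℝ] EuclideanSpace ℝ (Fin n)) with hS
  set d : ℝ := LinearMap.det (S : EuclideanSpace ℝ (Fin n) →ₗ[ℝ] EuclideanSpace ℝ (Fin n)) with hd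
  have hdne : d ≠ 0 := T.toLinearEquiv.isUnit_det'.ne_zero
  have h₁ : Function.LeftInverse
      (ContinuousLinearMap.adjoint ((T.symm : EuclideanSpace ℝ (Fin n) →L[ℝ] EuclideanSpace ℝ (Fin n))))
      (ContinuousLinearMap.adjoint S) := by
    intro x
    rw [← ContinuousLinearMap.comp_apply, ← ContinuousLinearMap.adjoint_comp,
      ContinuousLinearEquiv.coe_comp_coe_symm, ContinuousLinearMap.adjoint_id,
      ContinuousLinearMap.id_apply]
  have h₂ : Function.RightInverse
      (ContinuousLinearMap.adjoint ((T.symm : EuclideanSpace ℝ (Fin n) →L[ℝ] EuclideanSpace ℝ (Fin n))))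
      (ContinuousLinearMap.adjoint S) := by
    intro x
    rw [← ContinuousLinearMap.comp_apply, ← ContinuousLinearMap.adjoint_comp,
      ContinuousLinearEquiv.coe_symm_comp_coe, ContinuousLinearMap.adjoint_id,
      ContinuousLinearMap.id_apply]
  set A : EuclideanSpace ℝ (Fin n) ≃L[ℝ] EuclideanSpace ℝ (Fin n) := ContinuousLinearEquiv.equivOfInverse
    (ContinuousLinearMap.adjoint S) (ContinuousLinearMap.adjoint ((T.symm : EuclideanSpace ℝ (Fin n) →L[ℝ] EuclideanSpace ℝ (Fin n)))) h₁ h₂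
    with hA
  have hAapp : ∀ θ : EuclideanSpace ℝ (Fin n), A θ = (ContinuousLinearMap.adjoint S) θ := fun θ => rfl
  have hAdet : LinearMap.det (A : EuclideanSpace ℝ (Fin n) →ₗ[ℝ] EuclideanSpace ℝ (Fin n)) = d := by
    have hcoe : (A : EuclideanSpace ℝ (Fin n) →ₗ[ℝ] EuclideanSpace ℝ (Fin n)) =
        ((ContinuousLinearMap.adjoint S : EuclideanSpace ℝ (Fin n) →L[ℝ] EuclideanSpace ℝ (Fin n)) : EuclideanSpace ℝ (Fin n) →ₗ[ℝ] EuclideanSpace ℝ (Fin n)) := rfl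
    rw [hcoe, det_adjoint n S]
  have hnpos : (0:ℝ) < n := by exact_mod_cast lt_of_lt_of_le zero_lt_one (by exact_mod_cast hn)
  have hnp : 0 < (n:ℝ)/p := div_pos hnpos hp
  set F : EuclideanSpace ℝ (Fin n) → ℝ := fun x => |g x| ^ ((n:ℝ)/p) with hF
  have hF0 : ∀ x, 0 ≤ F x := fun x => Real.rpow_nonneg (abs_nonneg _) _
  have hFc : ContinuousOn F {(0:EuclideanSpace ℝ (Fin n))}ᶜ :=
    (hgc.abs).rpow_const (fun x _ => Or.inr hnp.le)
  have hFm : Measurable F := by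
    apply measurable_of_measurable_on_compl_singleton (0:EuclideanSpace ℝ (Fin n))
    exact (hFc.restrict).measurable
  have hFh : ∀ c : ℝ, 0 < c → ∀ x : EuclideanSpace ℝ (Fin n), F (c • x) = c ^ (-(n:ℝ)) * F x := by
    intro c hc x
    have hcp : 0 < c ^ (-p) := Real.rpow_pos_of_pos hc _
    simp only [hF]
    rw [hghom c hc x, abs_mul, abs_of_pos hcp,
      Real.mul_rpow hcp.le (abs_nonneg _), ← Real.rpow_mul hc.le]
    congr 2
    field_simp
  have key := sphere_int n hn A F hFm hFc hF0 hFh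
  rw [hAdet] at key
  have hd0 : (0:ℝ) < |d| := abs_pos.2 hdne
  calc ∫ θ : Metric.sphere (0:EuclideanSpace ℝ (Fin n)) 1,
        |d * g ((ContinuousLinearMap.adjoint S) (θ:EuclideanSpace ℝ (Fin n)))| ^ ((n:ℝ)/p)
        ∂(volume : Measure (EuclideanSpace ℝ (Fin n))).toSphere
      = ∫ θ : Metric.sphere (0:EuclideanSpace ℝ (Fin n)) 1, |d| ^ ((n:ℝ)/p) * F (A (θ:EuclideanSpace ℝ (Fin n)))
          ∂(volume : Measure (EuclideanSpace ℝ (Fin n))).toSphere := by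
        refine integral_congr_ae (Filter.Eventually.of_forall fun θ => ?_)
        dsimp only
        rw [hAapp, abs_mul, Real.mul_rpow (abs_nonneg _) (abs_nonneg _)]
    _ = |d| ^ ((n:ℝ)/p) * ∫ θ : Metric.sphere (0:EuclideanSpace ℝ (Fin n)) 1, F (A (θ:EuclideanSpace ℝ (Fin n)))
          ∂(volume : Measure (EuclideanSpace ℝ (Fin n))).toSphere := integral_const_mul _ _
    _ = |d| ^ ((n:ℝ)/p) * (|d|⁻¹ * ∫ θ : Metric.sphere (0:EuclideanSpace ℝ (Fin n)) 1, F (θ:EuclideanSpace ℝ (Fin n))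
          ∂(volume : Measure (EuclideanSpace ℝ (Fin n))).toSphere) := by rw [key]
    _ = |d| ^ ((n:ℝ)/p - 1) * ∫ θ : Metric.sphere (0:EuclideanSpace ℝ (Fin n)) 1, F (θ:EuclideanSpace ℝ (Fin n))
          ∂(volume : Measure (EuclideanSpace ℝ (Fin n))).toSphere := by
        rw [← mul_assoc]
        congr 1
        rw [Real.rpow_sub hd0, Real.rpow_one, ← div_eq_mul_inv]
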